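/- In the affine Weyl group Ã_n, for 2 ≤ k ≤ n, k ≤ j ≤ n, and j−1 ≤ l ≤ n−1, the identity r_0 (r_n ⋯ r_k)(r_1 ⋯ r_l) r_0 (r_n ⋯ r_j)(r_1 ⋯ r_{l+1}) = r_n r_0 (r_n ⋯ r_k)(r_1 ⋯ r_l) r_0 (r_n ⋯ r_j)(r_1 ⋯ r_l) holds. -/

import Mathlib

/-- The ascending product `r_a r_{a+1} ⋯ r_b` (the identity when `b < a`). -/
def ascProd {G : Type*} [Monoid G] (r : ℕ → G) (a b : ℕ) : G :=
  ((List.range' a (b + 1 - a)).map r).prod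

/-- The descending product `r_a r_{a-1} ⋯ r_b` (the identity when `a < b`). -/
def descProd {G : Type*} [Monoid G] (r : ℕ → G) (a b : ℕ) : G :=
  ((List.range' b (a + 1 - b)).reverse.map r).prod

namespace AffineG10Aux

variable {G : Type*} [Group G]

lemma ascProd_nil (r : ℕ → G) (a b : ℕ) (h : b < a) : ascProd r a b = 1 := by
  unfold ascProd
  have e : b + 1 - a = 0 := by omega
  simp [e]

lemma descProd_nil (r : ℕ → G) (a b : ℕ) (h : a < b) : descProd r a b = 1 := by
  unfold descProd
  have e : a + 1 - b = 0 := by omega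
  simp [e]

lemma ascProd_single (r : ℕ → G) (a : ℕ) : ascProd r a a = r a := by
  unfold ascProd
  have e : a + 1 - a = 1 := by omega
  simp [e]

lemma descProd_single (r : ℕ → G) (a : ℕ) : descProd r a a = r a := by
  unfold descProd
  have e : a + 1 - a = 1 := by omega
  simp [e]

lemma ascProd_concat (r : ℕ → G) (a b : ℕ) (h : a ≤ b + 1) :
    ascProd r a (b + 1) = ascProd r a b * r (b + 1) := by
  unfold ascProd
  have e1 : b + 1 + 1 - a = (b + 1 - a) + 1 := by omega
  have e2 : a + 1 * (b + 1 - a) = b + 1 := by omega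
  rw [e1, List.range'_concat, e2]
  simp

lemma ascProd_cons (r : ℕ → G) (a b : ℕ) (h : a ≤ b) :
    ascProd r a b = r a * ascProd r (a + 1) b := by
  unfold ascProd
  have e1 : b + 1 - a = (b + 1 - (a + 1)) + 1 := by omega
  rw [e1, List.range'_succ]
  simp

lemma descProd_cons (r : ℕ → G) (a b : ℕ) (h : b ≤ a + 1) :
    descProd r (a + 1) b = r (a + 1) * descProd r a b := by
  unfold descProd
  have e1 : a + 1 + 1 - b = (a + 1 - b) + 1 := by omega
  have e2 : b + 1 * (a + 1 - b) = a + 1 := by omega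
  rw [e1, List.range'_concat, e2]
  simp

lemma ascProd_split (r : ℕ → G) (a b c : ℕ) (hab : a ≤ b + 1) (hbc : b ≤ c) :
    ascProd r a c = ascProd r a b * ascProd r (b + 1) c := by
  have e : a + 1 * (b + 1 - a) = b + 1 := by omega
  have h := @List.range'_append a (b + 1 - a) (c - b) 1
  rw [e] at h
  unfold ascProd
  have e2 : c + 1 - (b + 1) = c - b := by omega
  have e3 : b + 1 - a + (c - b) = c + 1 - a := by omega
  rw [e2, ← List.prod_append, ← List.map_append, h, e3]

lemma descProd_split (r : ℕ → G) (a b c : ℕ) (hc1 : 1 ≤ c) (hbc : b ≤ c) (hca : c ≤ a + 1) :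
    descProd r a b = descProd r a c * descProd r (c - 1) b := by
  have e : b + 1 * (c - b) = c := by omega
  have h := @List.range'_append b (c - b) (a + 1 - c) 1
  rw [e] at h
  unfold descProd
  have e2 : c - 1 + 1 - b = c - b := by omega
  have e3 : c - b + (a + 1 - c) = a + 1 - b := by omega
  rw [e2, ← List.prod_append, ← List.map_append, ← List.reverse_append, h, e3]

lemma commute_ascProd (r : ℕ → G) (x : G) (a b : ℕ)
    (h : ∀ p, a ≤ p → p ≤ b → x * r p = r p * x) :
    x * ascProd r a b = ascProd r a b * x := by
  unfold ascProd
  refine (Commute.list_prod_right _ _ ?_).eq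
  intro y hy
  simp only [List.mem_map, List.mem_range'_1] at hy
  obtain ⟨p, hp, rfl⟩ := hy
  exact h p hp.1 (by omega)

lemma commute_descProd (r : ℕ → G) (x : G) (a b : ℕ)
    (h : ∀ p, b ≤ p → p ≤ a → x * r p = r p * x) :
    x * descProd r a b = descProd r a b * x := by
  unfold descProd
  refine (Commute.list_prod_right _ _ ?_).eq
  intro y hy
  simp only [List.mem_map, List.mem_reverse, List.mem_range'_1] at hy
  obtain ⟨p, hp, rfl⟩ := hy
  exact h p hp.1 (by omega)


section Relations

variable {G : Type*} [Group G] (r : ℕ → G) (n : ℕ)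
variable (h2 : ∀ i j, i + 1 < j → j ≤ n → ¬(i = 0 ∧ j = n) → r i * r j = r j * r i)
variable (h3 : ∀ i < n, r i * r (i + 1) * r i = r (i + 1) * r i * r (i + 1))

include h2 h3 in
lemma shift1 (c i : ℕ) (h2i : 2 ≤ i) (hic : i ≤ c) (hcn : c ≤ n) :
    r i * ascProd r 1 c = ascProd r 1 c * r (i - 1) := by
  obtain ⟨i, rfl⟩ : ∃ i', i = i' + 2 := ⟨i - 2, by omega⟩
  show r (i + 2) * ascProd r 1 c = ascProd r 1 c * r (i + 1)
  have e1 : ascProd r 1 c = ascProd r 1 i * (r (i+1) * (r (i+2) * ascProd r (i+3) c)) := by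
    rw [ascProd_split r 1 i c (by omega) (by omega), ascProd_cons r (i+1) c (by omega),
        show i+1+1 = i+2 from by omega, ascProd_cons r (i+2) c (by omega),
        show i+2+1 = i+3 from by omega]
  have hb : r (i+1) * r (i+2) * r (i+1) = r (i+2) * r (i+1) * r (i+2) := h3 (i+1) (by omega)
  have hb2 : r (i+2) * (r (i+1) * r (i+2)) = r (i+1) * (r (i+2) * r (i+1)) := by
    simp only [← mul_assoc]; exact hb.symm
  have cA : r (i+2) * ascProd r 1 i = ascProd r 1 i * r (i+2) :=
    commute_ascProd r (r (i+2)) 1 i (fun p hp1 hp2 => (h2 p (i+2) (by omega) (by omega) (by omega)).symm)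
  have cB : r (i+1) * ascProd r (i+3) c = ascProd r (i+3) c * r (i+1) :=
    commute_ascProd r (r (i+1)) (i+3) c (fun p hp1 hp2 => h2 (i+1) p (by omega) (by omega) (by omega))
  calc r (i+2) * ascProd r 1 c
      = r (i+2) * ascProd r 1 i * (r (i+1) * (r (i+2) * ascProd r (i+3) c)) := by
        rw [e1]; simp only [mul_assoc]
    _ = ascProd r 1 i * r (i+2) * (r (i+1) * (r (i+2) * ascProd r (i+3) c)) := by rw [cA]
    _ = ascProd r 1 i * (r (i+2) * (r (i+1) * r (i+2)) * ascProd r (i+3) c) := by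
        simp only [mul_assoc]
    _ = ascProd r 1 i * (r (i+1) * (r (i+2) * r (i+1)) * ascProd r (i+3) c) := by rw [hb2]
    _ = ascProd r 1 i * (r (i+1) * (r (i+2) * (r (i+1) * ascProd r (i+3) c))) := by
        simp only [mul_assoc]
    _ = ascProd r 1 i * (r (i+1) * (r (i+2) * (ascProd r (i+3) c * r (i+1)))) := by rw [cB]
    _ = ascProd r 1 i * (r (i+1) * (r (i+2) * ascProd r (i+3) c)) * r (i+1) := by
        simp only [mul_assoc]
    _ = ascProd r 1 c * r (i+1) := by rw [← e1]

include h2 h3 in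
lemma shiftD_aux (a c : ℕ) (ha : 2 ≤ a) (hcn : c ≤ n) :
    ∀ t, a + t ≤ c → descProd r (a + t) a * ascProd r 1 c
      = ascProd r 1 c * descProd r (a + t - 1) (a - 1) := by
  intro t
  induction t with
  | zero =>
    intro h
    have e1 : descProd r (a + 0) a = r a := by
      rw [show a + 0 = a from by omega, descProd_single]
    have e2 : descProd r (a + 0 - 1) (a - 1) = r (a - 1) := by
      rw [show a + 0 - 1 = a - 1 from by omega, descProd_single]
    rw [e1, e2]
    exact shift1 r n h2 h3 c a ha (by omega) hcn
  | succ t ih =>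
    intro h
    have ih' := ih (by omega)
    show descProd r (a + t + 1) a * ascProd r 1 c = ascProd r 1 c * descProd r (a + t) (a - 1)
    have e1 : descProd r (a + t + 1) a = r (a + t + 1) * descProd r (a + t) a :=
      descProd_cons r (a + t) a (by omega)
    have sh : r (a + t + 1) * ascProd r 1 c = ascProd r 1 c * r (a + t) := by
      have := shift1 r n h2 h3 c (a + t + 1) (by omega) (by omega) hcn
      rwa [show a + t + 1 - 1 = a + t from by omega] at this
    have e2 : descProd r (a + t) (a - 1) = r (a + t) * descProd r (a + t - 1) (a - 1) := by
      have := descProd_cons r (a + t - 1) (a - 1) (by omega)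
      rwa [show a + t - 1 + 1 = a + t from by omega] at this
    calc descProd r (a+t+1) a * ascProd r 1 c
        = r (a+t+1) * (descProd r (a+t) a * ascProd r 1 c) := by rw [e1, mul_assoc]
      _ = r (a+t+1) * (ascProd r 1 c * descProd r (a+t-1) (a-1)) := by rw [ih']
      _ = (r (a+t+1) * ascProd r 1 c) * descProd r (a+t-1) (a-1) := by rw [mul_assoc]
      _ = (ascProd r 1 c * r (a+t)) * descProd r (a+t-1) (a-1) := by rw [sh]
      _ = ascProd r 1 c * (r (a+t) * descProd r (a+t-1) (a-1)) := by rw [mul_assoc]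
      _ = ascProd r 1 c * descProd r (a+t) (a-1) := by rw [← e2]

include h2 h3 in
lemma shiftD (a b c : ℕ) (ha : 2 ≤ a) (hab : a ≤ b) (hbc : b ≤ c) (hcn : c ≤ n) :
    descProd r b a * ascProd r 1 c = ascProd r 1 c * descProd r (b - 1) (a - 1) := by
  obtain ⟨t, rfl⟩ : ∃ t, b = a + t := ⟨b - a, by omega⟩
  exact shiftD_aux r n h2 h3 a c ha hcn t hbc


include h2 h3 in
lemma crux : ∀ m, 1 ≤ m → m ≤ n →
    ascProd r 2 m * ascProd r 1 (m - 1) * r m = ascProd r 1 m * ascProd r 1 (m - 1) := by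
  intro m
  induction m with
  | zero => intro h _; exact absurd h (by omega)
  | succ m ih =>
    intro _ hmn
    rcases Nat.eq_zero_or_pos m with rfl | hm
    · show ascProd r 2 1 * ascProd r 1 0 * r 1 = ascProd r 1 1 * ascProd r 1 0
      rw [ascProd_nil r 2 1 (by omega), ascProd_nil r 1 0 (by omega), ascProd_single]
      simp
    · obtain ⟨p, rfl⟩ : ∃ p, m = p + 1 := ⟨m - 1, by omega⟩
      have ih' : ascProd r 2 (p+1) * ascProd r 1 p * r (p+1)
          = ascProd r 1 (p+1) * ascProd r 1 p := by
        have := ih (by omega) (by omega)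
        rwa [show p + 1 - 1 = p from by omega] at this
      show ascProd r 2 (p+2) * ascProd r 1 (p+1) * r (p+2)
          = ascProd r 1 (p+2) * ascProd r 1 (p+1)
      have eA : ascProd r 2 (p+2) = ascProd r 2 (p+1) * r (p+2) :=
        ascProd_concat r 2 (p+1) (by omega)
      have eB : ascProd r 1 (p+1) = ascProd r 1 p * r (p+1) :=
        ascProd_concat r 1 p (by omega)
      have eC : ascProd r 1 (p+2) = ascProd r 1 (p+1) * r (p+2) :=
        ascProd_concat r 1 (p+1) (by omega)
      have cst : r (p+2) * ascProd r 1 p = ascProd r 1 p * r (p+2) :=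
        commute_ascProd r (r (p+2)) 1 p
          (fun q hq1 hq2 => (h2 q (p+2) (by omega) (by omega) (by omega)).symm)
      have br : r (p+2) * r (p+1) * r (p+2) = r (p+1) * r (p+2) * r (p+1) :=
        (h3 (p+1) (by omega)).symm
      calc ascProd r 2 (p+2) * ascProd r 1 (p+1) * r (p+2)
          = ascProd r 2 (p+1) * (r (p+2) * ascProd r 1 p) * (r (p+1) * r (p+2)) := by
            rw [eA, eB]; simp only [mul_assoc]
        _ = ascProd r 2 (p+1) * (ascProd r 1 p * r (p+2)) * (r (p+1) * r (p+2)) := by rw [cst]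
        _ = ascProd r 2 (p+1) * ascProd r 1 p * (r (p+2) * r (p+1) * r (p+2)) := by
            simp only [mul_assoc]
        _ = ascProd r 2 (p+1) * ascProd r 1 p * (r (p+1) * r (p+2) * r (p+1)) := by rw [br]
        _ = (ascProd r 2 (p+1) * ascProd r 1 p * r (p+1)) * (r (p+2) * r (p+1)) := by
            simp only [mul_assoc]
        _ = ascProd r 1 (p+1) * ascProd r 1 p * (r (p+2) * r (p+1)) := by rw [ih']
        _ = ascProd r 1 (p+1) * (ascProd r 1 p * r (p+2)) * r (p+1) := by
            simp only [mul_assoc]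
        _ = ascProd r 1 (p+1) * (r (p+2) * ascProd r 1 p) * r (p+1) := by rw [← cst]
        _ = ascProd r 1 (p+2) * ascProd r 1 (p+1) := by rw [eC, eB]; simp only [mul_assoc]

include h2 h3 in
lemma dagger (q : ℕ) (hq : q + 2 ≤ n) :
    ascProd r 2 (q+1) * r (q+2) * ascProd r 1 (q+1) * r (q+2)
      = ascProd r 1 (q+1) * r (q+2) * ascProd r 1 (q+1) := by
  have eB : ascProd r 1 (q+1) = ascProd r 1 q * r (q+1) := ascProd_concat r 1 q (by omega)
  have cst : r (q+2) * ascProd r 1 q = ascProd r 1 q * r (q+2) :=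
    commute_ascProd r (r (q+2)) 1 q
      (fun p hp1 hp2 => (h2 p (q+2) (by omega) (by omega) (by omega)).symm)
  have br : r (q+2) * r (q+1) * r (q+2) = r (q+1) * r (q+2) * r (q+1) :=
    (h3 (q+1) (by omega)).symm
  have cr : ascProd r 2 (q+1) * ascProd r 1 q * r (q+1)
      = ascProd r 1 (q+1) * ascProd r 1 q := by
    have := crux r n h2 h3 (q+1) (by omega) (by omega)
    rwa [show q + 1 - 1 = q from by omega] at this
  calc ascProd r 2 (q+1) * r (q+2) * ascProd r 1 (q+1) * r (q+2)
      = ascProd r 2 (q+1) * (r (q+2) * ascProd r 1 q) * (r (q+1) * r (q+2)) := by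
        rw [eB]; simp only [mul_assoc]
    _ = ascProd r 2 (q+1) * (ascProd r 1 q * r (q+2)) * (r (q+1) * r (q+2)) := by rw [cst]
    _ = ascProd r 2 (q+1) * ascProd r 1 q * (r (q+2) * r (q+1) * r (q+2)) := by
        simp only [mul_assoc]
    _ = ascProd r 2 (q+1) * ascProd r 1 q * (r (q+1) * r (q+2) * r (q+1)) := by rw [br]
    _ = (ascProd r 2 (q+1) * ascProd r 1 q * r (q+1)) * (r (q+2) * r (q+1)) := by
        simp only [mul_assoc]
    _ = ascProd r 1 (q+1) * ascProd r 1 q * (r (q+2) * r (q+1)) := by rw [cr]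
    _ = ascProd r 1 (q+1) * (ascProd r 1 q * r (q+2)) * r (q+1) := by
        simp only [mul_assoc]
    _ = ascProd r 1 (q+1) * (r (q+2) * ascProd r 1 q) * r (q+1) := by rw [← cst]
    _ = ascProd r 1 (q+1) * r (q+2) * ascProd r 1 (q+1) := by rw [eB]; simp only [mul_assoc]


include h2 h3 in
lemma star2 (j m : ℕ) (hj : 2 ≤ j) (hjm : j ≤ m) (hmn : m ≤ n) :
    ascProd r 2 (m-1) * descProd r m j * ascProd r 1 m
      = ascProd r 1 (m-1) * descProd r m j * ascProd r 1 (m-1) := by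
  obtain ⟨q, rfl⟩ : ∃ q, m = q + 2 := ⟨m - 2, by omega⟩
  show ascProd r 2 (q+1) * descProd r (q+2) j * ascProd r 1 (q+2)
      = ascProd r 1 (q+1) * descProd r (q+2) j * ascProd r 1 (q+1)
  have eC : ascProd r 1 (q+2) = ascProd r 1 (q+1) * r (q+2) :=
    ascProd_concat r 1 (q+1) (by omega)
  have dg := dagger r n h2 h3 q (by omega)
  rcases Nat.lt_or_ge j (q+2) with hlt | hge
  · obtain ⟨w, rfl⟩ : ∃ w, j = w + 2 := ⟨j - 2, by omega⟩
    have eD : descProd r (q+2) (w+2) = r (q+2) * descProd r (q+1) (w+2) :=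
      descProd_cons r (q+1) (w+2) (by omega)
    have sh : descProd r (q+1) (w+2) * ascProd r 1 (q+1)
        = ascProd r 1 (q+1) * descProd r q (w+1) :=
      shiftD r n h2 h3 (w+2) (q+1) (q+1) (by omega) (by omega) (by omega) (by omega)
    have cm : r (q+2) * descProd r q (w+1) = descProd r q (w+1) * r (q+2) :=
      commute_descProd r (r (q+2)) q (w+1)
        (fun p hp1 hp2 => (h2 p (q+2) (by omega) (by omega) (by omega)).symm)
    calc ascProd r 2 (q+1) * descProd r (q+2) (w+2) * ascProd r 1 (q+2)
        = ascProd r 2 (q+1) * (r (q+2) * (descProd r (q+1) (w+2) * ascProd r 1 (q+1)) * r (q+2)) := by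
          rw [eD, eC]; simp only [mul_assoc]
      _ = ascProd r 2 (q+1) * (r (q+2) * (ascProd r 1 (q+1) * descProd r q (w+1)) * r (q+2)) := by
          rw [sh]
      _ = ascProd r 2 (q+1) * r (q+2) * ascProd r 1 (q+1) * (descProd r q (w+1) * r (q+2)) := by
          simp only [mul_assoc]
      _ = ascProd r 2 (q+1) * r (q+2) * ascProd r 1 (q+1) * (r (q+2) * descProd r q (w+1)) := by
          rw [← cm]
      _ = (ascProd r 2 (q+1) * r (q+2) * ascProd r 1 (q+1) * r (q+2)) * descProd r q (w+1) := by
          simp only [mul_assoc]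
      _ = (ascProd r 1 (q+1) * r (q+2) * ascProd r 1 (q+1)) * descProd r q (w+1) := by rw [dg]
      _ = ascProd r 1 (q+1) * r (q+2) * (ascProd r 1 (q+1) * descProd r q (w+1)) := by
          simp only [mul_assoc]
      _ = ascProd r 1 (q+1) * r (q+2) * (descProd r (q+1) (w+2) * ascProd r 1 (q+1)) := by
          rw [← sh]
      _ = ascProd r 1 (q+1) * descProd r (q+2) (w+2) * ascProd r 1 (q+1) := by
          rw [eD]; simp only [mul_assoc]
  · have hje : j = q + 2 := by omega
    subst hje
    have dsng : descProd r (q+2) (q+2) = r (q+2) := descProd_single r (q+2)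
    calc ascProd r 2 (q+1) * descProd r (q+2) (q+2) * ascProd r 1 (q+2)
        = ascProd r 2 (q+1) * r (q+2) * ascProd r 1 (q+1) * r (q+2) := by
          rw [dsng, eC]; simp only [mul_assoc]
      _ = ascProd r 1 (q+1) * r (q+2) * ascProd r 1 (q+1) := dg
      _ = ascProd r 1 (q+1) * descProd r (q+2) (q+2) * ascProd r 1 (q+1) := by rw [dsng]

include h2 h3 in
lemma star (j l : ℕ) (hj2 : 2 ≤ j) (hjl : j ≤ l + 1) (hln : l + 1 ≤ n) :
    ascProd r 2 l * descProd r n j * ascProd r 1 (l+1)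
      = ascProd r 1 l * descProd r n j * ascProd r 1 l := by
  have dsp : descProd r n j = descProd r n (l+2) * descProd r (l+1) j := by
    have := descProd_split r n j (l+2) (by omega) (by omega) (by omega)
    rwa [show l + 2 - 1 = l + 1 from by omega] at this
  have s2 : ascProd r 2 l * descProd r (l+1) j * ascProd r 1 (l+1)
      = ascProd r 1 l * descProd r (l+1) j * ascProd r 1 l := by
    have := star2 r n h2 h3 j (l+1) hj2 hjl hln
    rwa [show l + 1 - 1 = l from by omega] at this
  have c1 : ascProd r 2 l * descProd r n (l+2) = descProd r n (l+2) * ascProd r 2 l :=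
    commute_descProd r (ascProd r 2 l) n (l+2)
      (fun p hp1 hp2 => (commute_ascProd r (r p) 2 l
        (fun q hq1 hq2 => (h2 q p (by omega) (by omega) (by omega)).symm)).symm)
  have c2 : ascProd r 1 l * descProd r n (l+2) = descProd r n (l+2) * ascProd r 1 l :=
    commute_descProd r (ascProd r 1 l) n (l+2)
      (fun p hp1 hp2 => (commute_ascProd r (r p) 1 l
        (fun q hq1 hq2 => (h2 q p (by omega) (by omega) (by omega)).symm)).symm)
  calc ascProd r 2 l * descProd r n j * ascProd r 1 (l+1)
      = ascProd r 2 l * descProd r n (l+2) * (descProd r (l+1) j * ascProd r 1 (l+1)) := by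
        rw [dsp]; simp only [mul_assoc]
    _ = descProd r n (l+2) * ascProd r 2 l * (descProd r (l+1) j * ascProd r 1 (l+1)) := by
        rw [c1]
    _ = descProd r n (l+2) * (ascProd r 2 l * descProd r (l+1) j * ascProd r 1 (l+1)) := by
        simp only [mul_assoc]
    _ = descProd r n (l+2) * (ascProd r 1 l * descProd r (l+1) j * ascProd r 1 l) := by
        rw [s2]
    _ = descProd r n (l+2) * ascProd r 1 l * (descProd r (l+1) j * ascProd r 1 l) := by
        simp only [mul_assoc]
    _ = ascProd r 1 l * descProd r n (l+2) * (descProd r (l+1) j * ascProd r 1 l) := by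
        rw [← c2]
    _ = ascProd r 1 l * descProd r n j * ascProd r 1 l := by rw [dsp]; simp only [mul_assoc]

end Relations

end AffineG10Aux

open AffineG10Aux in
/-- In Ã_n, for 2 ≤ k ≤ n, k ≤ j ≤ n, j−1 ≤ l ≤ n−1: r_0 (r_n ⋯ r_k)(r_1 ⋯ r_l) r_0 (r_n ⋯ r_j)(r_1 ⋯ r_{l+1}) = r_n r_0 (r_n ⋯ r_k)(r_1 ⋯ r_l) r_0 (r_n ⋯ r_j)(r_1 ⋯ r_l). -/
theorem affine_g10 (n : ℕ) (hn : 2 ≤ n) {G : Type*} [Group G] (r : ℕ → G)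
    (h1 : ∀ i ≤ n, r i * r i = 1)
    (h2 : ∀ i j, i + 1 < j → j ≤ n → ¬(i = 0 ∧ j = n) → r i * r j = r j * r i)
    (h3 : ∀ i < n, r i * r (i + 1) * r i = r (i + 1) * r i * r (i + 1))
    (h4 : r 0 * r n * r 0 = r n * r 0 * r n)
    (k j l : ℕ) (hk2 : 2 ≤ k) (hkn : k ≤ n) (hkj : k ≤ j) (hjn : j ≤ n)
    (hjl : j - 1 ≤ l) (hln : l ≤ n - 1) :
    r 0 * descProd r n k * ascProd r 1 l * r 0 * descProd r n j * ascProd r 1 (l + 1) =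
      r n * (r 0 * descProd r n k * ascProd r 1 l * r 0 * descProd r n j * ascProd r 1 l) := by
  have hl1 : 1 ≤ l := by omega
  have eN : descProd r n k = r n * descProd r (n-1) k := by
    have := descProd_cons r (n-1) k (by omega)
    rwa [show n - 1 + 1 = n from by omega] at this
  have c0 : r 0 * descProd r (n-1) k = descProd r (n-1) k * r 0 :=
    commute_descProd r (r 0) (n-1) k
      (fun p hp1 hp2 => h2 0 p (by omega) (by omega) (by omega))
  have eL : ascProd r 1 l = r 1 * ascProd r 2 l := by
    have := ascProd_cons r 1 l hl1
    rwa [show (1:ℕ) + 1 = 2 from by omega] at this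
  have c0' : r 0 * ascProd r 2 l = ascProd r 2 l * r 0 :=
    commute_ascProd r (r 0) 2 l
      (fun p hp1 hp2 => h2 0 p (by omega) (by omega) (by omega))
  have br01 : r 0 * r 1 * r 0 = r 1 * r 0 * r 1 := h3 0 (by omega)
  have key : ascProd r 2 l * descProd r n j * ascProd r 1 (l+1)
      = ascProd r 1 l * descProd r n j * ascProd r 1 l :=
    star r n h2 h3 j l (by omega) (by omega) (by omega)
  have e010 : r 0 * ascProd r 1 l * r 0 = r 1 * (r 0 * ascProd r 1 l) := by
    calc r 0 * ascProd r 1 l * r 0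
        = r 0 * r 1 * (ascProd r 2 l * r 0) := by rw [eL]; simp only [mul_assoc]
      _ = r 0 * r 1 * (r 0 * ascProd r 2 l) := by rw [c0']
      _ = (r 0 * r 1 * r 0) * ascProd r 2 l := by simp only [mul_assoc]
      _ = (r 1 * r 0 * r 1) * ascProd r 2 l := by rw [br01]
      _ = r 1 * (r 0 * (r 1 * ascProd r 2 l)) := by simp only [mul_assoc]
      _ = r 1 * (r 0 * ascProd r 1 l) := by rw [← eL]
  calc r 0 * descProd r n k * ascProd r 1 l * r 0 * descProd r n j * ascProd r 1 (l + 1)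
      = r 0 * descProd r n k * (r 1 * (ascProd r 2 l * r 0) * (descProd r n j * ascProd r 1 (l+1))) := by
        rw [eL]; simp only [mul_assoc]
    _ = r 0 * descProd r n k * (r 1 * (r 0 * ascProd r 2 l) * (descProd r n j * ascProd r 1 (l+1))) := by
        rw [← c0']
    _ = r 0 * descProd r n k * (r 1 * (r 0 * (ascProd r 2 l * descProd r n j * ascProd r 1 (l+1)))) := by
        simp only [mul_assoc]
    _ = r 0 * descProd r n k * (r 1 * (r 0 * (ascProd r 1 l * descProd r n j * ascProd r 1 l))) := by
        rw [key]
    _ = r 0 * (r n * descProd r (n-1) k) * ((r 0 * ascProd r 1 l * r 0) * (descProd r n j * ascProd r 1 l)) := by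
        rw [eN, e010]; simp only [mul_assoc]
    _ = r 0 * (r n * ((descProd r (n-1) k * r 0) * (ascProd r 1 l * (r 0 * (descProd r n j * ascProd r 1 l))))) := by
        simp only [mul_assoc]
    _ = r 0 * (r n * ((r 0 * descProd r (n-1) k) * (ascProd r 1 l * (r 0 * (descProd r n j * ascProd r 1 l))))) := by
        rw [← c0]
    _ = (r 0 * r n * r 0) * (descProd r (n-1) k * (ascProd r 1 l * (r 0 * (descProd r n j * ascProd r 1 l)))) := by
        simp only [mul_assoc]
    _ = (r n * r 0 * r n) * (descProd r (n-1) k * (ascProd r 1 l * (r 0 * (descProd r n j * ascProd r 1 l)))) := by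
        rw [h4]
    _ = r n * (r 0 * (r n * descProd r (n-1) k) * (ascProd r 1 l * (r 0 * (descProd r n j * ascProd r 1 l)))) := by
        simp only [mul_assoc]
    _ = r n * (r 0 * descProd r n k * (ascProd r 1 l * (r 0 * (descProd r n j * ascProd r 1 l)))) := by
        rw [← eN]
    _ = r n * (r 0 * descProd r n k * ascProd r 1 l * r 0 * descProd r n j * ascProd r 1 l) := by
        simp only [mul_assoc]
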